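/- Let ε > 0, L ∈ ℕ, and let V_ℓ > 0 and C_ℓ > 0 for ℓ = 0, …, L be positive reals. Then for every choice of positive reals n₀, …, n_L satisfying the variance constraint ∑_{ℓ=0}^{L} V_ℓ/n_ℓ ≤ ε²/2, the total cost satisfies ∑_{ℓ=0}^{L} n_ℓ·C_ℓ ≥ (2/ε²)·(∑_{ℓ=0}^{L} √(V_ℓ·C_ℓ))². In other words, the sample-size choice N_ℓ = (2/ε²)·√(V_ℓ/C_ℓ)·∑_{j=0}^{L} √(V_j·C_j) minimizes the total cost among all positive sample sizes satisfying the variance constraint. -/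

import Mathlib

open Finset

/-- Among all positive (real-valued) sample sizes `n_ℓ` satisfying the variance
constraint `∑ V_ℓ/n_ℓ ≤ ε²/2`, the total cost `∑ n_ℓ C_ℓ` is at least
`(2/ε²)·(∑ √(V_ℓ C_ℓ))²`; i.e. the choice `N_ℓ = (2/ε²)·√(V_ℓ/C_ℓ)·∑_j √(V_j C_j)`
is cost-optimal. -/
theorem mlmc_cost_lower_bound
    (ε : ℝ) (hε : 0 < ε) (L : ℕ) (V C : ℕ → ℝ)
    (hV : ∀ ℓ ≤ L, 0 < V ℓ) (hC : ∀ ℓ ≤ L, 0 < C ℓ)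
    (n : ℕ → ℝ) (hn : ∀ ℓ ≤ L, 0 < n ℓ)
    (hvar : ∑ ℓ ∈ Finset.range (L + 1), V ℓ / n ℓ ≤ ε ^ 2 / 2) :
    (2 / ε ^ 2) * (∑ ℓ ∈ Finset.range (L + 1), Real.sqrt (V ℓ * C ℓ)) ^ 2
      ≤ ∑ ℓ ∈ Finset.range (L + 1), n ℓ * C ℓ := by
  have hcost_nonneg : 0 ≤ ∑ ℓ ∈ Finset.range (L + 1), n ℓ * C ℓ :=
    Finset.sum_nonneg fun ℓ hℓ => by
      have hℓ' := Finset.mem_range.mp hℓ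
      exact le_of_lt (mul_pos (hn ℓ (Nat.lt_succ_iff.mp hℓ')) (hC ℓ (Nat.lt_succ_iff.mp hℓ')))
  have hCS : (∑ ℓ ∈ Finset.range (L + 1), Real.sqrt (V ℓ * C ℓ)) ^ 2
      ≤ (∑ ℓ ∈ Finset.range (L + 1), V ℓ / n ℓ) *
        ∑ ℓ ∈ Finset.range (L + 1), n ℓ * C ℓ := by
    apply sum_sq_le_sum_mul_sum_of_sq_eq_mul
    · intro i hi
      have hi' := Nat.lt_succ_iff.mp (Finset.mem_range.mp hi)
      exact le_of_lt (div_pos (hV i hi') (hn i hi'))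
    · intro i hi
      have hi' := Nat.lt_succ_iff.mp (Finset.mem_range.mp hi)
      exact le_of_lt (mul_pos (hn i hi') (hC i hi'))
    · intro i hi
      have hi' := Nat.lt_succ_iff.mp (Finset.mem_range.mp hi)
      rw [Real.sq_sqrt (le_of_lt (mul_pos (hV i hi') (hC i hi')))]
      field_simp
      rw [mul_div_assoc, div_self (ne_of_gt (hn i hi')), mul_one]
  have h2 : (∑ ℓ ∈ Finset.range (L + 1), Real.sqrt (V ℓ * C ℓ)) ^ 2
      ≤ ε ^ 2 / 2 * ∑ ℓ ∈ Finset.range (L + 1), n ℓ * C ℓ :=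
    hCS.trans (mul_le_mul_of_nonneg_right hvar hcost_nonneg)
  have hε2 : (0:ℝ) < ε ^ 2 := pow_pos hε 2
  rw [div_mul_eq_mul_div, div_le_iff₀ hε2] at *
  nlinarith [h2]
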